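/- Let x̂ be in the interior of the second-order cone K ⊆ ℝ^d. Every obliquely truncated cone C(w,v) = {x ∈ K : wᵀx ≤ wᵀv} (with w, v interior points of K) containing x̂ has volume at least (x̂_0² - ‖x̂_1‖²)^{d/2} · V_d. -/

import Mathlib

open scoped BigOperators RealInnerProductSpace
open MeasureTheory

/-- The second-order cone in `ℝ^{n+1}`. -/
def socE (n : ℕ) : Set (EuclideanSpace ℝ (Fin (n + 1))) :=
  {x | Real.sqrt (∑ j : Fin n, x j.succ ^ 2) ≤ x 0}

/-- The interior of the second-order cone. -/
def socIntE (n : ℕ) : Set (EuclideanSpace ℝ (Fin (n + 1))) :=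
  {x | Real.sqrt (∑ j : Fin n, x j.succ ^ 2) < x 0}

/-- The (obliquely) truncated second-order cone `C(w,v) = {x ∈ K : wᵀx ≤ wᵀv}`. -/
def Ctrunc (n : ℕ) (w v : EuclideanSpace ℝ (Fin (n + 1))) :
    Set (EuclideanSpace ℝ (Fin (n + 1))) :=
  {x ∈ socE n | ⟪w, x⟫ ≤ ⟪w, v⟫}

/-- The unit vector `e = (1; 0)`. -/
noncomputable def eSOC (n : ℕ) : EuclideanSpace ℝ (Fin (n + 1)) :=
  EuclideanSpace.single 0 1

noncomputable def boostL (n : ℕ) (a : ℝ) (b : Fin n → ℝ) :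
    EuclideanSpace ℝ (Fin (n + 1)) →ₗ[ℝ] EuclideanSpace ℝ (Fin (n + 1)) where
  toFun x := WithLp.toLp 2 ((fun i => Fin.cases (a * x 0 + ∑ j : Fin n, b j * x j.succ)
      (fun j : Fin n =>
        x 0 * b j + x j.succ + ((∑ k : Fin n, b k * x k.succ) / (1 + a)) * b j) i) : Fin (n + 1) → ℝ)
  map_add' x y := by
    ext i
    have hxy : ∀ k : Fin (n + 1), (x + y) k = x k + y k := fun k => rfl
    induction i using Fin.cases with
    | zero =>
      simp only [PiLp.add_apply, WithLp.ofLp_toLp]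
      show _ = _ + _
      simp only [Fin.cases_zero, hxy, mul_add, Finset.sum_add_distrib]
      ring
    | succ j =>
      simp only [PiLp.add_apply, WithLp.ofLp_toLp]
      show _ = _ + _
      simp only [Fin.cases_succ, hxy, mul_add, Finset.sum_add_distrib]
      ring
  map_smul' c x := by
    ext i
    have hxy : ∀ k : Fin (n + 1), (c • x) k = c * x k := fun k => rfl
    induction i using Fin.cases with
    | zero =>
      simp only [PiLp.smul_apply, WithLp.ofLp_toLp, smul_eq_mul, RingHom.id_apply]
      show _ = c * _
      simp only [Fin.cases_zero, hxy]
      rw [show (∑ k : Fin n, b k * (c * x k.succ)) = c * ∑ k : Fin n, b k * x k.succ by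
        rw [Finset.mul_sum]; exact Finset.sum_congr rfl fun k _ => by ring]
      ring
    | succ j =>
      simp only [PiLp.smul_apply, WithLp.ofLp_toLp, smul_eq_mul, RingHom.id_apply]
      show _ = c * _
      simp only [Fin.cases_succ, hxy]
      rw [show (∑ k : Fin n, b k * (c * x k.succ)) = c * ∑ k : Fin n, b k * x k.succ by
        rw [Finset.mul_sum]; exact Finset.sum_congr rfl fun k _ => by ring]
      ring

lemma boostL_zero (n : ℕ) (a : ℝ) (b : Fin n → ℝ) (x : EuclideanSpace ℝ (Fin (n + 1))) :
    boostL n a b x 0 = a * x 0 + ∑ j : Fin n, b j * x j.succ := rfl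

lemma boostL_succ (n : ℕ) (a : ℝ) (b : Fin n → ℝ) (x : EuclideanSpace ℝ (Fin (n + 1)))
    (j : Fin n) :
    boostL n a b x j.succ =
      x 0 * b j + x j.succ + ((∑ k : Fin n, b k * x k.succ) / (1 + a)) * b j := by
  simp only [boostL, LinearMap.coe_mk, AddHom.coe_mk, Fin.cases_succ]

lemma sum_expand (n : ℕ) (b y : Fin n → ℝ) (c : ℝ) :
    ∑ j : Fin n, (c * b j + y j) ^ 2 =
      c ^ 2 * ∑ j : Fin n, b j ^ 2 + 2 * c * ∑ j : Fin n, b j * y j + ∑ j : Fin n, y j ^ 2 := by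
  have h : ∀ j : Fin n, (c * b j + y j) ^ 2
      = c ^ 2 * b j ^ 2 + 2 * c * (b j * y j) + y j ^ 2 := fun j => by ring
  simp_rw [h, Finset.sum_add_distrib, ← Finset.mul_sum]

lemma boost_succ_eq (n : ℕ) (a : ℝ) (b : Fin n → ℝ) (x : EuclideanSpace ℝ (Fin (n + 1)))
    (j : Fin n) :
    boostL n a b x j.succ =
      (x 0 + (∑ k : Fin n, b k * x k.succ) / (1 + a)) * b j + x j.succ := by
  rw [boostL_succ]; ring

lemma boost_q (n : ℕ) (a : ℝ) (b : Fin n → ℝ) (ha : a ^ 2 = 1 + ∑ j : Fin n, b j ^ 2)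
    (hapos : 0 < a) (x : EuclideanSpace ℝ (Fin (n + 1))) :
    (boostL n a b x 0) ^ 2 - ∑ j : Fin n, (boostL n a b x j.succ) ^ 2
      = (x 0) ^ 2 - ∑ j : Fin n, (x j.succ) ^ 2 := by
  have h1a : 1 + a ≠ 0 := by positivity
  set s := ∑ k : Fin n, b k * x k.succ with hs
  have hB : ∑ j : Fin n, b j ^ 2 = a ^ 2 - 1 := by linarith
  have hsum : ∑ j : Fin n, (boostL n a b x j.succ) ^ 2
      = (x 0 + s / (1 + a)) ^ 2 * (a ^ 2 - 1) + 2 * (x 0 + s / (1 + a)) * s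
        + ∑ j : Fin n, (x j.succ) ^ 2 := by
    simp_rw [boost_succ_eq]
    rw [sum_expand, hB, ← hs]
  rw [hsum, boostL_zero, ← hs]
  field_simp
  ring

lemma boost_comp (n : ℕ) (a : ℝ) (b : Fin n → ℝ) (ha : a ^ 2 = 1 + ∑ j : Fin n, b j ^ 2)
    (hapos : 0 < a) (x : EuclideanSpace ℝ (Fin (n + 1))) :
    boostL n a b (boostL n a (-b) x) = x := by
  have h1a : 1 + a ≠ 0 := by positivity
  have hB : ∑ j : Fin n, b j ^ 2 = a ^ 2 - 1 := by linarith
  set s := ∑ k : Fin n, b k * x k.succ with hs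
  set y := boostL n a (-b) x with hy
  have hnegsum : ∑ k : Fin n, (-b) k * x k.succ = -s := by
    rw [hs, ← Finset.sum_neg_distrib]
    exact Finset.sum_congr rfl fun k _ => by simp
  have hy0 : y 0 = a * x 0 - s := by
    rw [hy, boostL_zero, hnegsum]; ring
  have hyj : ∀ j : Fin n, y j.succ = -(x 0) * b j + x j.succ + (s / (1 + a)) * b j := by
    intro j
    rw [hy, boostL_succ, hnegsum]
    simp only [Pi.neg_apply]
    ring
  have hys : ∑ k : Fin n, b k * y k.succ = -(x 0) * (a ^ 2 - 1) + s + (s / (1 + a)) * (a ^ 2 - 1) := by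
    simp_rw [hyj]
    have step : ∑ k : Fin n, b k * (-(x 0) * b k + x k.succ + s / (1 + a) * b k)
        = ∑ k : Fin n, (-(x 0) * b k ^ 2 + b k * x k.succ + s / (1 + a) * b k ^ 2) :=
      Finset.sum_congr rfl fun k _ => by ring
    rw [step, Finset.sum_add_distrib, Finset.sum_add_distrib, ← Finset.mul_sum,
      ← Finset.mul_sum, hB, ← hs]
  ext i
  induction i using Fin.cases with
  | zero =>
    rw [boostL_zero, hys, hy0]
    field_simp
    ring
  | succ j =>
    rw [boostL_succ, hys, hy0, hyj]
    field_simp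
    ring

noncomputable def reflL (n : ℕ) :
    EuclideanSpace ℝ (Fin (n + 1)) →ₗ[ℝ] EuclideanSpace ℝ (Fin (n + 1)) where
  toFun x := WithLp.toLp 2 ((fun i => Fin.cases (x 0) (fun j : Fin n => -(x j.succ)) i) : Fin (n + 1) → ℝ)
  map_add' x y := by
    ext i
    have hxy : ∀ k : Fin (n + 1), (x + y) k = x k + y k := fun k => rfl
    induction i using Fin.cases with
    | zero => simp only [PiLp.add_apply, WithLp.ofLp_toLp]; show _ = _ + _; simp [hxy]
    | succ j => simp only [PiLp.add_apply, WithLp.ofLp_toLp]; show _ = _ + _; simp [hxy]; try ring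
  map_smul' c x := by
    ext i
    have hxy : ∀ k : Fin (n + 1), (c • x) k = c * x k := fun k => rfl
    induction i using Fin.cases with
    | zero => simp only [PiLp.smul_apply, WithLp.ofLp_toLp, smul_eq_mul, RingHom.id_apply]; show _ = c * _; simp [hxy]
    | succ j => simp only [PiLp.smul_apply, WithLp.ofLp_toLp, smul_eq_mul, RingHom.id_apply]; show _ = c * _; simp [hxy]; try ring

lemma reflL_zero (n : ℕ) (x : EuclideanSpace ℝ (Fin (n + 1))) : reflL n x 0 = x 0 := rfl

lemma reflL_succ (n : ℕ) (x : EuclideanSpace ℝ (Fin (n + 1))) (j : Fin n) :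
    reflL n x j.succ = -(x j.succ) := by
  simp only [reflL, LinearMap.coe_mk, AddHom.coe_mk, Fin.cases_succ]

lemma reflL_invol (n : ℕ) : reflL n ∘ₗ reflL n = LinearMap.id := by
  apply LinearMap.ext
  intro x
  ext i
  induction i using Fin.cases with
  | zero => simp [LinearMap.comp_apply, reflL_zero]
  | succ j => simp [LinearMap.comp_apply, reflL_succ]

lemma boost_neg_eq (n : ℕ) (a : ℝ) (b : Fin n → ℝ) :
    boostL n a (-b) = reflL n ∘ₗ boostL n a b ∘ₗ reflL n := by
  apply LinearMap.ext
  intro x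
  have hnegsum : ∀ z : EuclideanSpace ℝ (Fin (n + 1)),
      ∑ k : Fin n, (-b) k * z k.succ = -∑ k : Fin n, b k * z k.succ := by
    intro z
    rw [← Finset.sum_neg_distrib]
    exact Finset.sum_congr rfl fun k _ => by simp
  have hrsum : ∑ k : Fin n, b k * (reflL n x) k.succ = -∑ k : Fin n, b k * x k.succ := by
    rw [← Finset.sum_neg_distrib]
    exact Finset.sum_congr rfl fun k _ => by rw [reflL_succ]; ring
  ext i
  induction i using Fin.cases with
  | zero =>
    simp only [LinearMap.comp_apply]
    rw [boostL_zero, hnegsum, reflL_zero, boostL_zero, reflL_zero, hrsum]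
    try ring
  | succ j =>
    simp only [LinearMap.comp_apply]
    rw [boostL_succ, hnegsum, reflL_succ, boostL_succ, reflL_zero, hrsum, reflL_succ]
    simp only [Pi.neg_apply]
    try ring

lemma boost_det_abs (n : ℕ) (a : ℝ) (b : Fin n → ℝ)
    (ha : a ^ 2 = 1 + ∑ j : Fin n, b j ^ 2) (hapos : 0 < a) :
    |LinearMap.det (boostL n a b)| = 1 := by
  have ha' : a ^ 2 = 1 + ∑ j : Fin n, (-b) j ^ 2 := by
    rw [ha]
    congr 1
    exact Finset.sum_congr rfl fun k _ => by simp
  have hcomp : boostL n a b ∘ₗ boostL n a (-b) = LinearMap.id :=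
    LinearMap.ext fun x => boost_comp n a b ha hapos x
  have hdetr : LinearMap.det (reflL n) * LinearMap.det (reflL n) = 1 := by
    have := congrArg LinearMap.det (reflL_invol n)
    rwa [LinearMap.det_comp, LinearMap.det_id] at this
  have h1 : LinearMap.det (boostL n a b) * LinearMap.det (boostL n a (-b)) = 1 := by
    have := congrArg LinearMap.det hcomp
    rwa [LinearMap.det_comp, LinearMap.det_id] at this
  have h2 : LinearMap.det (boostL n a (-b)) = LinearMap.det (reflL n) * LinearMap.det (reflL n)
      * LinearMap.det (boostL n a b) := by
    rw [boost_neg_eq, LinearMap.det_comp, LinearMap.det_comp]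
    ring
  rw [h2, hdetr, one_mul] at h1
  rcases mul_self_eq_one_iff.mp h1 with h | h <;> rw [h] <;> norm_num

lemma mem_socE_iff (n : ℕ) (x : EuclideanSpace ℝ (Fin (n + 1))) :
    x ∈ socE n ↔ 0 ≤ x 0 ∧ ∑ j : Fin n, x j.succ ^ 2 ≤ (x 0) ^ 2 := by
  constructor
  · intro h
    have h0 : 0 ≤ x 0 := le_trans (Real.sqrt_nonneg _) h
    refine ⟨h0, ?_⟩
    have := Real.sq_sqrt (by positivity : (0:ℝ) ≤ ∑ j : Fin n, x j.succ ^ 2)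
    calc ∑ j : Fin n, x j.succ ^ 2 = (Real.sqrt (∑ j : Fin n, x j.succ ^ 2)) ^ 2 := this.symm
      _ ≤ (x 0) ^ 2 := by
          apply pow_le_pow_left₀ (Real.sqrt_nonneg _) h
  · rintro ⟨h0, h1⟩
    calc Real.sqrt (∑ j : Fin n, x j.succ ^ 2) ≤ Real.sqrt ((x 0) ^ 2) := Real.sqrt_le_sqrt h1
      _ = x 0 := Real.sqrt_sq h0

lemma boost_mem (n : ℕ) (a : ℝ) (b : Fin n → ℝ)
    (ha : a ^ 2 = 1 + ∑ j : Fin n, b j ^ 2) (hapos : 0 < a)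
    (x : EuclideanSpace ℝ (Fin (n + 1))) (hx : x ∈ socE n) :
    boostL n a b x ∈ socE n := by
  rw [mem_socE_iff] at hx ⊢
  obtain ⟨hx0, hx1⟩ := hx
  set s := ∑ k : Fin n, b k * x k.succ with hs
  have hCS : s ^ 2 ≤ (∑ j : Fin n, b j ^ 2) * ∑ j : Fin n, x j.succ ^ 2 :=
    Finset.sum_mul_sq_le_sq_mul_sq _ _ _
  have hBnn : (0:ℝ) ≤ ∑ j : Fin n, b j ^ 2 := by positivity
  have hs2 : s ^ 2 ≤ (a * x 0) ^ 2 := by nlinarith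
  have h0 : 0 ≤ a * x 0 + s := by
    have habs : |s| ≤ a * x 0 := by
      have := Real.sqrt_le_sqrt hs2
      rwa [Real.sqrt_sq_eq_abs, Real.sqrt_sq (by positivity)] at this
    have := neg_abs_le s
    linarith
  have h00 : boostL n a b x 0 = a * x 0 + s := by rw [boostL_zero, ← hs]
  constructor
  · rw [h00]; exact h0
  · have hq := boost_q n a b ha hapos x
    have : ∑ j : Fin n, (boostL n a b x j.succ) ^ 2
        = (boostL n a b x 0) ^ 2 - ((x 0) ^ 2 - ∑ j : Fin n, x j.succ ^ 2) := by linarith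
    rw [this]
    nlinarith

lemma smul_mem_socE (n : ℕ) (c : ℝ) (hc : 0 ≤ c) (x : EuclideanSpace ℝ (Fin (n + 1)))
    (hx : x ∈ socE n) : c • x ∈ socE n := by
  rw [mem_socE_iff] at hx ⊢
  obtain ⟨h0, h1⟩ := hx
  have hap : ∀ k : Fin (n + 1), (c • x) k = c * x k := fun k => rfl
  constructor
  · rw [hap]; positivity
  · simp_rw [hap, mul_pow, ← Finset.mul_sum]
    nlinarith

lemma boost_inner (n : ℕ) (a : ℝ) (b : Fin n → ℝ)
    (ha : a ^ 2 = 1 + ∑ j : Fin n, b j ^ 2) (hapos : 0 < a) (μ : ℝ) (hμ : 0 < μ)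
    (w : EuclideanSpace ℝ (Fin (n + 1))) (hw0 : w 0 = μ * a)
    (hws : ∀ j : Fin n, w j.succ = -(μ * b j)) (x : EuclideanSpace ℝ (Fin (n + 1))) :
    ⟪w, boostL n a b x⟫ = μ * x 0 := by
  have h1a : 1 + a ≠ 0 := by positivity
  have hB : ∑ j : Fin n, b j ^ 2 = a ^ 2 - 1 := by linarith
  set s := ∑ k : Fin n, b k * x k.succ with hs
  have hinner : ⟪w, boostL n a b x⟫ = ∑ i : Fin (n + 1), w i * boostL n a b x i := by
    rw [PiLp.inner_apply]
    exact Finset.sum_congr rfl fun i _ => by simp [RCLike.inner_apply, conj_trivial, mul_comm]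
  have hterm : ∀ j : Fin n, w j.succ * boostL n a b x j.succ
      = (-(μ * (x 0 + s / (1 + a)))) * b j ^ 2 - μ * (b j * x j.succ) := by
    intro j
    rw [boost_succ_eq, hws, ← hs]
    ring
  have hsum2 : ∑ j : Fin n, w j.succ * boostL n a b x j.succ
      = (-(μ * (x 0 + s / (1 + a)))) * (a ^ 2 - 1) - μ * s := by
    simp_rw [hterm]
    rw [Finset.sum_sub_distrib, ← Finset.mul_sum, ← Finset.mul_sum, hB, ← hs]
  rw [hinner, Fin.sum_univ_succ, boostL_zero, hsum2, ← hs, hw0]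
  field_simp
  ring

lemma revCS (w0 x0 W X S : ℝ) (hw0 : 0 ≤ w0) (hx0 : 0 ≤ x0) (hW : 0 ≤ W) (hX : 0 ≤ X)
    (hWle : W ≤ w0 ^ 2) (hXle : X ≤ x0 ^ 2) (hCS : S ^ 2 ≤ W * X) :
    Real.sqrt (x0 ^ 2 - X) * Real.sqrt (w0 ^ 2 - W) ≤ w0 * x0 + S := by
  set sw := Real.sqrt W with hsw
  set sx := Real.sqrt X with hsx
  have hsw2 : sw ^ 2 = W := Real.sq_sqrt hW
  have hsx2 : sx ^ 2 = X := Real.sq_sqrt hX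
  have hswnn : 0 ≤ sw := Real.sqrt_nonneg _
  have hsxnn : 0 ≤ sx := Real.sqrt_nonneg _
  have hswle : sw ≤ w0 := by
    rw [hsw, show w0 = Real.sqrt (w0 ^ 2) from (Real.sqrt_sq hw0).symm]
    exact Real.sqrt_le_sqrt hWle
  have hsxle : sx ≤ x0 := by
    rw [hsx, show x0 = Real.sqrt (x0 ^ 2) from (Real.sqrt_sq hx0).symm]
    exact Real.sqrt_le_sqrt hXle
  have hSeq : -(sw * sx) ≤ S := by
    have h1 : S ^ 2 ≤ (sw * sx) ^ 2 := by nlinarith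
    have h2 : |S| ≤ sw * sx := by
      have := Real.sqrt_le_sqrt h1
      rwa [Real.sqrt_sq_eq_abs, Real.sqrt_sq (by positivity)] at this
    linarith [neg_abs_le S]
  have hprod : sw * sx ≤ w0 * x0 := mul_le_mul hswle hsxle hsxnn hw0
  have hpos : 0 ≤ w0 * x0 + S := by linarith
  have hkey : (x0 ^ 2 - X) * (w0 ^ 2 - W) ≤ (w0 * x0 + S) ^ 2 := by
    nlinarith [sq_nonneg (S + sw * sx), sq_nonneg (w0 * sx - x0 * sw),
      mul_nonneg (by linarith : (0:ℝ) ≤ w0 * x0 - sw * sx) (by linarith : (0:ℝ) ≤ S + sw * sx)]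
  calc Real.sqrt (x0 ^ 2 - X) * Real.sqrt (w0 ^ 2 - W)
      = Real.sqrt ((x0 ^ 2 - X) * (w0 ^ 2 - W)) := (Real.sqrt_mul (by linarith) _).symm
    _ ≤ Real.sqrt ((w0 * x0 + S) ^ 2) := Real.sqrt_le_sqrt hkey
    _ = w0 * x0 + S := Real.sqrt_sq hpos

lemma inner_eSOC (n : ℕ) (x : EuclideanSpace ℝ (Fin (n + 1))) : ⟪eSOC n, x⟫ = x 0 := by
  rw [eSOC, EuclideanSpace.inner_single_left]
  simp

lemma inner_expand (n : ℕ) (w x : EuclideanSpace ℝ (Fin (n + 1))) :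
    ⟪w, x⟫ = w 0 * x 0 + ∑ j : Fin n, w j.succ * x j.succ := by
  have h : ⟪w, x⟫ = ∑ i : Fin (n + 1), w i * x i := by
    rw [PiLp.inner_apply]
    exact Finset.sum_congr rfl fun i _ => by simp [RCLike.inner_apply, conj_trivial, mul_comm]
  rw [h, Fin.sum_univ_succ]

/-- every obliquely truncated cone `C(w,v)` (with `w, v` interior)
containing an interior point `x̂` has volume at least `(x̂₀² - ‖x̂₁‖²)^{d/2} ⬝ V_d`. -/
theorem stmt10 (n : ℕ) (xhat : EuclideanSpace ℝ (Fin (n + 1))) (hx : xhat ∈ socIntE n)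
    (w v : EuclideanSpace ℝ (Fin (n + 1))) (hw : w ∈ socIntE n) (hv : v ∈ socIntE n)
    (hmem : xhat ∈ Ctrunc n w v) :
    ENNReal.ofReal ((xhat 0 ^ 2 - ∑ j : Fin n, xhat j.succ ^ 2) ^ (((n : ℝ) + 1) / 2)) *
        volume (Ctrunc n (eSOC n) (eSOC n)) ≤ volume (Ctrunc n w v) := by
  obtain ⟨hxK, hxle⟩ := hmem
  set X := ∑ j : Fin n, xhat j.succ ^ 2 with hX
  set W := ∑ j : Fin n, w j.succ ^ 2 with hW
  have hXnn : 0 ≤ X := by positivity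
  have hWnn : 0 ≤ W := by positivity
  have hxint : Real.sqrt X < xhat 0 := hx
  have hwint : Real.sqrt W < w 0 := hw
  have hx0pos : 0 < xhat 0 := lt_of_le_of_lt (Real.sqrt_nonneg _) hxint
  have hw0pos : 0 < w 0 := lt_of_le_of_lt (Real.sqrt_nonneg _) hwint
  have hXlt : X < xhat 0 ^ 2 := by nlinarith [Real.sq_sqrt hXnn, Real.sqrt_nonneg X]
  have hWlt : W < w 0 ^ 2 := by nlinarith [Real.sq_sqrt hWnn, Real.sqrt_nonneg W]
  set lam := Real.sqrt (xhat 0 ^ 2 - X) with hlam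
  set μ := Real.sqrt (w 0 ^ 2 - W) with hmu
  have hlampos : 0 < lam := Real.sqrt_pos.mpr (by linarith)
  have hmupos : 0 < μ := Real.sqrt_pos.mpr (by linarith)
  have hlam2 : lam ^ 2 = xhat 0 ^ 2 - X := Real.sq_sqrt (by linarith)
  have hmu2 : μ ^ 2 = w 0 ^ 2 - W := Real.sq_sqrt (by linarith)
  set a := w 0 / μ with haDef
  set b := fun j : Fin n => -(w j.succ) / μ with hbDef
  have hbsum : ∑ j : Fin n, b j ^ 2 = W / μ ^ 2 := by
    rw [hW, Finset.sum_div]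
    exact Finset.sum_congr rfl fun j _ => by rw [hbDef, div_pow, neg_sq]
  have ha : a ^ 2 = 1 + ∑ j : Fin n, b j ^ 2 := by
    rw [hbsum, haDef, div_pow]
    field_simp
    linarith
  have hapos : 0 < a := div_pos hw0pos hmupos
  have hw0eq : w 0 = μ * a := by rw [haDef]; field_simp
  have hws : ∀ j : Fin n, w j.succ = -(μ * b j) := by
    intro j; rw [hbDef]; field_simp
  set G := boostL n a b with hG
  set T := lam • G with hT
  -- the inclusion
  have hsub : ⇑T '' Ctrunc n (eSOC n) (eSOC n) ⊆ Ctrunc n w v := by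
    rintro _ ⟨x, ⟨hxS, hxle1⟩, rfl⟩
    have hx01 : x 0 ≤ 1 := by
      have h1 := inner_eSOC n x
      have h2 := inner_eSOC n (eSOC n)
      have h3 : (eSOC n) 0 = 1 := by
        rw [eSOC]; simp [EuclideanSpace.single_apply]
      rw [h1, h2, h3] at hxle1
      exact hxle1
    have hTx : T x = lam • (G x) := rfl
    constructor
    · rw [hTx]
      exact smul_mem_socE n lam (le_of_lt hlampos) _ (boost_mem n a b ha hapos x hxS)
    · have hinG : ⟪w, G x⟫ = μ * x 0 := boost_inner n a b ha hapos μ hmupos w hw0eq hws x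
      have hT1 : ⟪w, T x⟫ = lam * (μ * x 0) := by
        rw [hTx, real_inner_smul_right, hinG]
      have hx0nn : 0 ≤ x 0 := by
        rw [mem_socE_iff] at hxS; exact hxS.1
      have step1 : lam * (μ * x 0) ≤ lam * μ := by
        have := mul_le_mul_of_nonneg_left hx01 (by positivity : (0:ℝ) ≤ lam * μ)
        calc lam * (μ * x 0) = lam * μ * x 0 := by ring
          _ ≤ lam * μ * 1 := this
          _ = lam * μ := by ring
      have hCS : (∑ j : Fin n, w j.succ * xhat j.succ) ^ 2 ≤ W * X :=
        Finset.sum_mul_sq_le_sq_mul_sq _ _ _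
      have step2 : lam * μ ≤ ⟪w, xhat⟫ := by
        rw [inner_expand n w xhat]
        exact revCS (w 0) (xhat 0) W X _ (le_of_lt hw0pos) (le_of_lt hx0pos)
          hWnn hXnn (le_of_lt hWlt) (le_of_lt hXlt) hCS
      rw [hT1]
      linarith
  -- the determinant
  have hfr : Module.finrank ℝ (EuclideanSpace ℝ (Fin (n + 1))) = n + 1 :=
    finrank_euclideanSpace_fin
  have hdetT : |LinearMap.det T| = lam ^ (n + 1) := by
    rw [hT, LinearMap.det_smul, hfr, abs_mul, abs_pow, boost_det_abs n a b ha hapos,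
      mul_one, abs_of_nonneg (le_of_lt hlampos)]
  -- the exponent
  have hexp : (xhat 0 ^ 2 - X) ^ (((n : ℝ) + 1) / 2) = lam ^ (n + 1) := by
    have h1 : xhat 0 ^ 2 - X = lam ^ 2 := hlam2.symm
    rw [h1, ← Real.rpow_natCast lam 2, ← Real.rpow_mul (le_of_lt hlampos),
      ← Real.rpow_natCast lam (n + 1)]
    norm_num
    ring_nf
  -- conclusion
  calc ENNReal.ofReal ((xhat 0 ^ 2 - X) ^ (((n : ℝ) + 1) / 2))
        * volume (Ctrunc n (eSOC n) (eSOC n))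
      = ENNReal.ofReal |LinearMap.det T| * volume (Ctrunc n (eSOC n) (eSOC n)) := by
        rw [hexp, hdetT]
    _ = volume (⇑T '' Ctrunc n (eSOC n) (eSOC n)) :=
        (Measure.addHaar_image_linearMap volume T _).symm
    _ ≤ volume (Ctrunc n w v) := measure_mono hsub
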